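/- Let g_1,…,g_T be admissible revenue functions with base prices p_t = g_t'(0) ∈ [m,M], let π ≥ 1, and let v̄_1,…,v̄_T be a CR-Pursuit(π) trajectory for this input. Then ∑_{t=1}^T g_t(v̄_t)/p_t ≤ (Δ/π)·(ln(M/m) + 1). -/

import Mathlib

/-- An admissible revenue function on `[0, Δ]` with base price in `[m, M]`. -/
def Admissible (Δ m M : ℝ) (g : ℝ → ℝ) : Prop :=
  ConcaveOn ℝ (Set.Icc 0 Δ) g ∧ MonotoneOn g (Set.Icc 0 Δ) ∧
  (∀ x ∈ Set.Icc (0:ℝ) Δ, DifferentiableAt ℝ g x) ∧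
  g 0 = 0 ∧ deriv g 0 ∈ Set.Icc m M

/-- Offline optimum for the first `n` revenue functions with inventory `Δ`. -/
noncomputable def eta (Δ : ℝ) (g : ℕ → ℝ → ℝ) (n : ℕ) : ℝ :=
  sSup { r : ℝ | ∃ v : ℕ → ℝ, (∀ t < n, 0 ≤ v t) ∧
    (∑ t ∈ Finset.range n, v t) ≤ Δ ∧ r = ∑ t ∈ Finset.range n, g t (v t) }

/-- A CR-Pursuit(π) trajectory for the first T revenue functions. -/
def CRTraj (Δ : ℝ) (g : ℕ → ℝ → ℝ) (T : ℕ) (pi : ℝ) (v : ℕ → ℝ) : Prop :=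
  ∀ t < T, v t ∈ Set.Icc 0 Δ ∧ pi * g t (v t) = eta Δ g (t+1) - eta Δ g t
open Set

open Set

lemma concave_incr_le {Δ : ℝ} {f : ℝ → ℝ} (hf : ConcaveOn ℝ (Icc 0 Δ) f)
    {u v c : ℝ} (hc : 0 ≤ c) (hcu : c ≤ u) (huv : u ≤ v) (hv : v ≤ Δ) :
    f v - f u ≤ f (v - c) - f (u - c) := by
  rcases eq_or_lt_of_le (by linarith : (0:ℝ) ≤ v - u + c) with h0 | hpos
  · have hc0 : c = 0 := by linarith
    subst hc0; simp
  · set s := v - u + c with hs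
    set θ := (v - u) / s with hθ
    have hsne : s ≠ 0 := ne_of_gt hpos
    have hθ0 : 0 ≤ θ := div_nonneg (by linarith) hpos.le
    have hθ1 : θ ≤ 1 := by rw [hθ, div_le_one hpos]; linarith
    have hu' : u - c ∈ Icc (0:ℝ) Δ := ⟨by linarith, by linarith⟩
    have hvmem : v ∈ Icc (0:ℝ) Δ := ⟨by linarith, hv⟩
    have e1 : θ * (u - c) + (1 - θ) * v = u := by
      rw [hθ]; field_simp; ring
    have e2 : (1 - θ) * (u - c) + θ * v = v - c := by
      rw [hθ]; field_simp; ring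
    have h1 := hf.2 hu' hvmem (show (0:ℝ) ≤ θ from hθ0)
      (show (0:ℝ) ≤ 1 - θ by linarith) (show θ + (1 - θ) = 1 by ring)
    have h2 := hf.2 hu' hvmem (show (0:ℝ) ≤ 1 - θ by linarith)
      (show (0:ℝ) ≤ θ from hθ0) (show (1 - θ) + θ = 1 by ring)
    simp only [smul_eq_mul] at h1; rw [e1] at h1
    simp only [smul_eq_mul] at h2; rw [e2] at h2
    linarith

lemma g_le_tangent {Δ : ℝ} {g : ℝ → ℝ} (hΔ : 0 < Δ)
    (hconc : ConcaveOn ℝ (Icc 0 Δ) g) (hdiff : DifferentiableAt ℝ g 0)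
    (hg0 : g 0 = 0) {x : ℝ} (hx : x ∈ Icc 0 Δ) : g x ≤ deriv g 0 * x := by
  rcases eq_or_lt_of_le hx.1 with h0 | hxpos
  · simp [← h0, hg0]
  · have hxne : x ≠ 0 := ne_of_gt hxpos
    have key : ∀ h ∈ Ioo (0:ℝ) x, g x / x ≤ slope g 0 h := by
      intro h hh
      have h0m : (0:ℝ) ∈ Icc (0:ℝ) Δ := ⟨le_refl _, hΔ.le⟩
      have hcomb := hconc.2 hx h0m (show (0:ℝ) ≤ h / x from div_nonneg hh.1.le hxpos.le)
        (show (0:ℝ) ≤ 1 - h / x by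
          have : h / x ≤ 1 := by rw [div_le_one hxpos]; exact hh.2.le
          linarith) (show h / x + (1 - h / x) = 1 by ring)
      simp only [smul_eq_mul] at hcomb
      have harg : h / x * x + (1 - h / x) * 0 = h := by field_simp; ring
      rw [harg, hg0] at hcomb
      have hgh : h / x * g x ≤ g h := by linarith
      rw [slope_def_field, hg0]
      rw [div_le_div_iff₀ hxpos (by simpa using hh.1)]
      calc g x * (h - 0) = h / x * g x * x := by field_simp; ring
        _ ≤ g h * x := by
            have := mul_le_mul_of_nonneg_right hgh hxpos.le
            linarith
        _ = (g h - 0) * x := by ring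
    have hd := hdiff.hasDerivAt
    rw [hasDerivAt_iff_tendsto_slope] at hd
    have hd' : Filter.Tendsto (slope g 0) (nhdsWithin 0 (Ioi 0)) (nhds (deriv g 0)) :=
      hd.mono_left (nhdsWithin_mono _ (fun y hy => ne_of_gt hy))
    have hmem : Ioo (0:ℝ) x ∈ nhdsWithin (0:ℝ) (Ioi 0) :=
      Ioo_mem_nhdsGT_of_mem ⟨le_refl _, hxpos⟩
    have hub : g x / x ≤ deriv g 0 :=
      ge_of_tendsto hd' (Filter.eventually_of_mem hmem key)
    calc g x = (g x / x) * x := by field_simp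
      _ ≤ deriv g 0 * x := mul_le_mul_of_nonneg_right hub hxpos.le

namespace CRP

/-- Achievable revenues with first `n` functions and budget `b`. -/
def SetS (g : ℕ → ℝ → ℝ) (n : ℕ) (b : ℝ) : Set ℝ :=
  { r : ℝ | ∃ v : ℕ → ℝ, (∀ t < n, 0 ≤ v t) ∧
    (∑ t ∈ Finset.range n, v t) ≤ b ∧ r = ∑ t ∈ Finset.range n, g t (v t) }

noncomputable def NN (g : ℕ → ℝ → ℝ) (n : ℕ) (b : ℝ) : ℝ := sSup (SetS g n b)

lemma eta_eq (Δ : ℝ) (g : ℕ → ℝ → ℝ) (n : ℕ) : eta Δ g n = NN g n Δ := rfl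

section Facts

variable {Δ m M : ℝ} {g : ℕ → ℝ → ℝ} {n : ℕ}

lemma zero_mem (hg : ∀ t < n, Admissible Δ m M (g t)) {b : ℝ} (hb : 0 ≤ b) :
    (0:ℝ) ∈ SetS g n b := by
  refine ⟨fun _ => 0, fun t _ => le_refl _, by simp [hb], ?_⟩
  rw [Finset.sum_eq_zero]
  intro t ht
  exact (hg t (Finset.mem_range.mp ht)).2.2.2.1

lemma mem_le (hΔ : 0 < Δ) (hm : 0 < m) (hmM : m ≤ M)
    (hg : ∀ t < n, Admissible Δ m M (g t)) {b : ℝ} (hb : b ∈ Icc 0 Δ)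
    {r : ℝ} (hr : r ∈ SetS g n b) : r ≤ M * b := by
  obtain ⟨v, hv0, hvs, rfl⟩ := hr
  have hvmem : ∀ t ∈ Finset.range n, v t ∈ Icc (0:ℝ) Δ := by
    intro t ht
    have h0 : 0 ≤ v t := hv0 t (Finset.mem_range.mp ht)
    have hle : v t ≤ ∑ s ∈ Finset.range n, v s :=
      Finset.single_le_sum (fun s hs => hv0 s (Finset.mem_range.mp hs)) ht
    exact ⟨h0, by linarith [hb.2]⟩
  calc ∑ t ∈ Finset.range n, g t (v t) ≤ ∑ t ∈ Finset.range n, M * v t := by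
        apply Finset.sum_le_sum
        intro t ht
        have ha := hg t (Finset.mem_range.mp ht)
        have h1 : g t (v t) ≤ deriv (g t) 0 * v t :=
          g_le_tangent hΔ ha.1 (ha.2.2.1 0 ⟨le_refl _, hΔ.le⟩) ha.2.2.2.1 (hvmem t ht)
        have h2 : deriv (g t) 0 * v t ≤ M * v t :=
          mul_le_mul_of_nonneg_right ha.2.2.2.2.2 (hvmem t ht).1
        linarith
    _ = M * ∑ t ∈ Finset.range n, v t := by rw [Finset.mul_sum]
    _ ≤ M * b := by
        apply mul_le_mul_of_nonneg_left hvs (by linarith)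

lemma bddAbove_S (hΔ : 0 < Δ) (hm : 0 < m) (hmM : m ≤ M)
    (hg : ∀ t < n, Admissible Δ m M (g t)) {b : ℝ} (hb : b ∈ Icc 0 Δ) :
    BddAbove (SetS g n b) :=
  ⟨M * b, fun _ hr => mem_le hΔ hm hmM hg hb hr⟩

lemma NN_nonneg (hΔ : 0 < Δ) (hm : 0 < m) (hmM : m ≤ M)
    (hg : ∀ t < n, Admissible Δ m M (g t)) {b : ℝ} (hb : b ∈ Icc 0 Δ) :
    0 ≤ NN g n b :=
  le_csSup (bddAbove_S hΔ hm hmM hg hb) (zero_mem hg hb.1)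

lemma NN_le (hΔ : 0 < Δ) (hm : 0 < m) (hmM : m ≤ M)
    (hg : ∀ t < n, Admissible Δ m M (g t)) {b : ℝ} (hb : b ∈ Icc 0 Δ) :
    NN g n b ≤ M * b :=
  csSup_le ⟨0, zero_mem hg hb.1⟩ (fun _ hr => mem_le hΔ hm hmM hg hb hr)

lemma NN_mono (hΔ : 0 < Δ) (hm : 0 < m) (hmM : m ≤ M)
    (hg : ∀ t < n, Admissible Δ m M (g t)) {b b' : ℝ} (hb : 0 ≤ b) (hbb : b ≤ b')
    (hb' : b' ≤ Δ) : NN g n b ≤ NN g n b' := by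
  apply csSup_le ⟨0, zero_mem hg hb⟩
  intro r hr
  apply le_csSup (bddAbove_S hΔ hm hmM hg ⟨by linarith, hb'⟩)
  obtain ⟨v, h1, h2, h3⟩ := hr
  exact ⟨v, h1, by linarith, h3⟩

lemma NN_concave (hΔ : 0 < Δ) (hm : 0 < m) (hmM : m ≤ M)
    (hg : ∀ t < n, Admissible Δ m M (g t)) :
    ConcaveOn ℝ (Icc 0 Δ) (NN g n) := by
  refine ⟨convex_Icc _ _, ?_⟩
  intro b₁ hb₁ b₂ hb₂ a b ha hb hab
  simp only [smul_eq_mul]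
  have hcomb : a * b₁ + b * b₂ ∈ Icc (0:ℝ) Δ :=
    (convex_Icc (0:ℝ) Δ) hb₁ hb₂ ha hb hab
  -- key: for r₁ ∈ S b₁, r₂ ∈ S b₂, a*r₁+b*r₂ ≤ NN (a b₁ + b b₂)
  have key : ∀ r₁ ∈ SetS g n b₁, ∀ r₂ ∈ SetS g n b₂,
      a * r₁ + b * r₂ ≤ NN g n (a * b₁ + b * b₂) := by
    rintro r₁ ⟨v₁, hv₁0, hv₁s, rfl⟩ r₂ ⟨v₂, hv₂0, hv₂s, rfl⟩
    have hmem : ∀ (v : ℕ → ℝ) (bb : ℝ), (∀ t < n, 0 ≤ v t) →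
        (∑ t ∈ Finset.range n, v t) ≤ bb → bb ∈ Icc (0:ℝ) Δ →
        ∀ t ∈ Finset.range n, v t ∈ Icc (0:ℝ) Δ := by
      intro v bb h0 hs hbb t ht
      have hle : v t ≤ ∑ s ∈ Finset.range n, v s :=
        Finset.single_le_sum (fun s hs' => h0 s (Finset.mem_range.mp hs')) ht
      exact ⟨h0 t (Finset.mem_range.mp ht), by linarith [hbb.2]⟩
    have hm₁ := hmem v₁ b₁ hv₁0 hv₁s hb₁
    have hm₂ := hmem v₂ b₂ hv₂0 hv₂s hb₂
    have helem : (∑ t ∈ Finset.range n, g t (a * v₁ t + b * v₂ t)) ∈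
        SetS g n (a * b₁ + b * b₂) := by
      refine ⟨fun t => a * v₁ t + b * v₂ t, ?_, ?_, rfl⟩
      · intro t ht
        have := hv₁0 t ht; have := hv₂0 t ht
        positivity
      · have : (∑ t ∈ Finset.range n, (a * v₁ t + b * v₂ t)) =
            a * (∑ t ∈ Finset.range n, v₁ t) + b * (∑ t ∈ Finset.range n, v₂ t) := by
          rw [Finset.sum_add_distrib, Finset.mul_sum, Finset.mul_sum]
        rw [this]
        have l1 : a * (∑ t ∈ Finset.range n, v₁ t) ≤ a * b₁ :=
          mul_le_mul_of_nonneg_left hv₁s ha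
        have l2 : b * (∑ t ∈ Finset.range n, v₂ t) ≤ b * b₂ :=
          mul_le_mul_of_nonneg_left hv₂s hb
        linarith
    have hval : a * (∑ t ∈ Finset.range n, g t (v₁ t)) + b * (∑ t ∈ Finset.range n, g t (v₂ t))
        ≤ ∑ t ∈ Finset.range n, g t (a * v₁ t + b * v₂ t) := by
      rw [Finset.mul_sum, Finset.mul_sum, ← Finset.sum_add_distrib]
      apply Finset.sum_le_sum
      intro t ht
      have hc := (hg t (Finset.mem_range.mp ht)).1.2 (hm₁ t ht) (hm₂ t ht) ha hb hab
      simpa only [smul_eq_mul] using hc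
    exact le_trans hval (le_csSup (bddAbove_S hΔ hm hmM hg hcomb) helem)
  have hne₁ : (SetS g n b₁).Nonempty := ⟨0, zero_mem hg hb₁.1⟩
  have hne₂ : (SetS g n b₂).Nonempty := ⟨0, zero_mem hg hb₂.1⟩
  rcases eq_or_lt_of_le ha with ha0 | hapos
  · have hb1 : b = 1 := by linarith
    simp only [← ha0, hb1, zero_mul, one_mul, zero_add]
    apply csSup_le hne₂
    intro r hr
    apply le_csSup (bddAbove_S hΔ hm hmM hg (by simpa [← ha0, hb1] using hcomb)) hr
  rcases eq_or_lt_of_le hb with hb0 | hbpos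
  · have ha1 : a = 1 := by linarith
    simp only [← hb0, ha1, zero_mul, one_mul, add_zero]
    apply csSup_le hne₁
    intro r hr
    apply le_csSup (bddAbove_S hΔ hm hmM hg (by simpa [← hb0, ha1] using hcomb)) hr
  · rw [show a * NN g n b₁ + b * NN g n b₂ = a * NN g n b₁ + b * NN g n b₂ from rfl]
    have step1 : NN g n b₁ ≤ (NN g n (a * b₁ + b * b₂) - b * NN g n b₂) / a := by
      apply csSup_le hne₁
      intro r₁ hr₁
      rw [le_div_iff₀ hapos]
      have step2 : NN g n b₂ ≤ (NN g n (a * b₁ + b * b₂) - a * r₁) / b := by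
        apply csSup_le hne₂
        intro r₂ hr₂
        rw [le_div_iff₀ hbpos]
        have := key r₁ hr₁ r₂ hr₂
        linarith
      have := mul_le_mul_of_nonneg_left step2 hb
      rw [mul_div_cancel₀ _ (ne_of_gt hbpos)] at this
      linarith
    have := mul_le_mul_of_nonneg_left step1 ha
    rw [mul_div_cancel₀ _ (ne_of_gt hapos)] at this
    linarith

/-- Upper sup-convolution: every achievable value with n+1 functions splits. -/
lemma supconv_le (hΔ : 0 < Δ) (hm : 0 < m) (hmM : m ≤ M)
    (hg : ∀ t < n + 1, Admissible Δ m M (g t)) {b : ℝ} (hb : b ∈ Icc 0 Δ)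
    {r : ℝ} (hr : r ∈ SetS g (n+1) b) :
    ∃ x, 0 ≤ x ∧ x ≤ b ∧ r ≤ g n x + NN g n (b - x) := by
  obtain ⟨v, hv0, hvs, rfl⟩ := hr
  have hg' : ∀ t < n, Admissible Δ m M (g t) := fun t ht => hg t (by omega)
  refine ⟨v n, hv0 n (by omega), ?_, ?_⟩
  · have : v n ≤ ∑ t ∈ Finset.range (n+1), v t :=
      Finset.single_le_sum (fun s hs => hv0 s (Finset.mem_range.mp hs))
        (Finset.self_mem_range_succ n)
    linarith
  · rw [Finset.sum_range_succ] at hvs ⊢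
    have hvn0 : 0 ≤ v n := hv0 n (by omega)
    have hsum0 : 0 ≤ ∑ x ∈ Finset.range n, v x :=
      Finset.sum_nonneg (fun s hs => hv0 s (by have := Finset.mem_range.mp hs; omega))
    have hmem : (∑ t ∈ Finset.range n, g t (v t)) ∈ SetS g n (b - v n) := by
      refine ⟨v, fun t ht => hv0 t (by omega), by linarith, rfl⟩
    have h5 : (∑ t ∈ Finset.range n, g t (v t)) ≤ NN g n (b - v n) :=
      le_csSup (bddAbove_S hΔ hm hmM hg'
        (⟨by linarith, by linarith [hb.2]⟩ : b - v n ∈ Icc (0:ℝ) Δ)) hmem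
    linarith

/-- Lower sup-convolution. -/
lemma supconv_ge (hΔ : 0 < Δ) (hm : 0 < m) (hmM : m ≤ M)
    (hg : ∀ t < n + 1, Admissible Δ m M (g t)) {b x : ℝ} (hb : b ∈ Icc 0 Δ)
    (hx0 : 0 ≤ x) (hxb : x ≤ b) :
    g n x + NN g n (b - x) ≤ NN g (n+1) b := by
  have hg' : ∀ t < n, Admissible Δ m M (g t) := fun t ht => hg t (by omega)
  have hbx : b - x ∈ Icc (0:ℝ) Δ := ⟨by linarith, by linarith [hb.2]⟩
  have key : ∀ r ∈ SetS g n (b - x), r ≤ NN g (n+1) b - g n x := by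
    rintro r ⟨v, hv0, hvs, rfl⟩
    have helem : (∑ t ∈ Finset.range n, g t (v t)) + g n x ∈ SetS g (n+1) b := by
      refine ⟨Function.update v n x, ?_, ?_, ?_⟩
      · intro t ht
        rcases Nat.lt_succ_iff_lt_or_eq.mp ht with h | h
        · rw [Function.update_of_ne (by omega)]; exact hv0 t h
        · rw [h, Function.update_self]; exact hx0
      · rw [Finset.sum_range_succ, Function.update_self]
        have : (∑ t ∈ Finset.range n, Function.update v n x t) =
            ∑ t ∈ Finset.range n, v t := by
          apply Finset.sum_congr rfl
          intro t ht
          rw [Function.update_of_ne (by have := Finset.mem_range.mp ht; omega)]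
        rw [this]; linarith
      · rw [Finset.sum_range_succ, Function.update_self]
        congr 1
        apply Finset.sum_congr rfl
        intro t ht
        rw [Function.update_of_ne (by have := Finset.mem_range.mp ht; omega)]
    have h5 : (∑ t ∈ Finset.range n, g t (v t)) + g n x ≤ NN g (n+1) b :=
      le_csSup (bddAbove_S hΔ hm hmM hg hb) helem
    linarith
  have : NN g n (b - x) ≤ NN g (n+1) b - g n x :=
    csSup_le ⟨0, zero_mem hg' hbx.1⟩ key
  linarith

/-- Adding a function only increases the optimum. -/
lemma NN_mono_t (hΔ : 0 < Δ) (hm : 0 < m) (hmM : m ≤ M)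
    (hg : ∀ t < n + 1, Admissible Δ m M (g t)) {b : ℝ} (hb : b ∈ Icc 0 Δ) :
    NN g n b ≤ NN g (n+1) b := by
  have h := supconv_ge hΔ hm hmM hg hb (le_refl 0) hb.1
  rw [(hg n (by omega)).2.2.2.1] at h
  simpa using h

/-- Supermodularity: increments in budget grow with n. -/
lemma supermod (hΔ : 0 < Δ) (hm : 0 < m) (hmM : m ≤ M)
    (hg : ∀ t < n + 1, Admissible Δ m M (g t)) {b b' : ℝ}
    (hb0 : 0 ≤ b) (hbb : b ≤ b') (hb' : b' ≤ Δ) :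
    NN g n b' - NN g n b ≤ NN g (n+1) b' - NN g (n+1) b := by
  have hg' : ∀ t < n, Admissible Δ m M (g t) := fun t ht => hg t (by omega)
  have hbm : b ∈ Icc (0:ℝ) Δ := ⟨hb0, by linarith⟩
  have hbm' : b' ∈ Icc (0:ℝ) Δ := ⟨by linarith, hb'⟩
  apply le_of_forall_pos_le_add
  intro ε hε
  obtain ⟨r, hrS, hrlt⟩ := exists_lt_of_lt_csSup ⟨0, zero_mem hg hbm.1⟩
    (show NN g (n+1) b - ε < NN g (n+1) b by linarith)
  obtain ⟨x, hx0, hxb, hrle⟩ := supconv_le hΔ hm hmM hg hbm hrS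
  have h1 : g n x + NN g n (b' - x) ≤ NN g (n+1) b' :=
    supconv_ge hΔ hm hmM hg hbm' hx0 (by linarith)
  have h2 : NN g n b' - NN g n b ≤ NN g n (b' - x) - NN g n (b - x) := by
    have := concave_incr_le (NN_concave hΔ hm hmM hg') hx0 hxb hbb hb'
    linarith
  linarith

lemma inc_nonneg (hΔ : 0 < Δ) (hm : 0 < m) (hmM : m ≤ M)
    (hg : ∀ t < n + 1, Admissible Δ m M (g t)) :
    NN g n Δ ≤ NN g (n+1) Δ :=
  NN_mono_t hΔ hm hmM hg ⟨hΔ.le, le_refl _⟩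

end Facts

/-- Constrained concave conjugate. -/
noncomputable def Afun (Δ : ℝ) (g : ℕ → ℝ → ℝ) (n : ℕ) (l : ℝ) : ℝ :=
  sSup ((fun c => NN g n c - l * c) '' Icc 0 Δ)

/-- The "regret" function `B`. -/
noncomputable def Bfun (Δ : ℝ) (g : ℕ → ℝ → ℝ) (n : ℕ) (l : ℝ) : ℝ :=
  Afun Δ g n l + l * Δ - NN g n Δ

section BFacts

variable {Δ m M : ℝ} {g : ℕ → ℝ → ℝ} {n : ℕ}

lemma Aset_nonempty (hΔ : 0 < Δ) {l : ℝ} :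
    ((fun c => NN g n c - l * c) '' Icc 0 Δ).Nonempty :=
  (nonempty_Icc.mpr hΔ.le).image _

lemma Aset_bdd (hΔ : 0 < Δ) (hm : 0 < m) (hmM : m ≤ M)
    (hg : ∀ t < n, Admissible Δ m M (g t)) {l : ℝ} (hl : 0 ≤ l) :
    BddAbove ((fun c => NN g n c - l * c) '' Icc 0 Δ) := by
  refine ⟨NN g n Δ, ?_⟩
  rintro y ⟨c, hc, rfl⟩
  have h1 : NN g n c ≤ NN g n Δ := NN_mono hΔ hm hmM hg hc.1 hc.2 (le_refl _)
  have h2 : 0 ≤ l * c := mul_nonneg hl hc.1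
  simp only []
  linarith

lemma Afun_le (hΔ : 0 < Δ) (hm : 0 < m) (hmM : m ≤ M)
    (hg : ∀ t < n, Admissible Δ m M (g t)) {l : ℝ} (hl : 0 ≤ l) :
    Afun Δ g n l ≤ NN g n Δ := by
  apply csSup_le (Aset_nonempty hΔ)
  rintro y ⟨c, hc, rfl⟩
  have h1 : NN g n c ≤ NN g n Δ := NN_mono hΔ hm hmM hg hc.1 hc.2 (le_refl _)
  have h2 : 0 ≤ l * c := mul_nonneg hl hc.1
  simp only []
  linarith

lemma Afun_elem_le (hΔ : 0 < Δ) (hm : 0 < m) (hmM : m ≤ M)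
    (hg : ∀ t < n, Admissible Δ m M (g t)) {l c : ℝ} (hl : 0 ≤ l)
    (hc : c ∈ Icc (0:ℝ) Δ) : NN g n c - l * c ≤ Afun Δ g n l :=
  le_csSup (Aset_bdd hΔ hm hmM hg hl) ⟨c, hc, rfl⟩

lemma Bfun_nonneg (hΔ : 0 < Δ) (hm : 0 < m) (hmM : m ≤ M)
    (hg : ∀ t < n, Admissible Δ m M (g t)) {l : ℝ} (hl : 0 ≤ l) :
    0 ≤ Bfun Δ g n l := by
  have := Afun_elem_le hΔ hm hmM hg hl (⟨hΔ.le, le_refl _⟩ : Δ ∈ Icc (0:ℝ) Δ)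
  unfold Bfun
  linarith

lemma Bfun_le (hΔ : 0 < Δ) (hm : 0 < m) (hmM : m ≤ M)
    (hg : ∀ t < n, Admissible Δ m M (g t)) {l : ℝ} (hl : 0 ≤ l) :
    Bfun Δ g n l ≤ l * Δ := by
  have := Afun_le hΔ hm hmM hg hl
  unfold Bfun
  linarith

lemma NN_zero {b : ℝ} (hb : 0 ≤ b) : NN g 0 b = 0 := by
  have hset : SetS g 0 b = {0} := by
    ext r
    simp [SetS, hb, eq_comm]
  rw [NN, hset, csSup_singleton]

lemma Bfun_zero (hΔ : 0 < Δ) {l : ℝ} (hl : 0 ≤ l) : Bfun Δ g 0 l = l * Δ := by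
  have hA : Afun Δ g 0 l = 0 := by
    apply le_antisymm
    · apply csSup_le (Aset_nonempty hΔ)
      rintro y ⟨c, hc, rfl⟩
      simp only [NN_zero hc.1]
      have : 0 ≤ l * c := mul_nonneg hl hc.1
      linarith
    · have h0 : (0:ℝ) ∈ ((fun c => NN g 0 c - l * c) '' Icc 0 Δ) := by
        refine ⟨0, ⟨le_refl _, hΔ.le⟩, by simp [NN_zero (le_refl (0:ℝ))]⟩
      apply le_csSup _ h0
      refine ⟨l * Δ + 0, ?_⟩
      rintro y ⟨c, hc, rfl⟩
      simp only [NN_zero hc.1]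
      have h1 : l * c ≤ l * Δ := mul_le_mul_of_nonneg_left hc.2 hl
      have h2 : 0 ≤ l * c := mul_nonneg hl hc.1
      linarith
  rw [Bfun, hA, NN_zero hΔ.le]
  ring

/-- Step: above the base price the conjugate does not increase. -/
lemma Afun_step (hΔ : 0 < Δ) (hm : 0 < m) (hmM : m ≤ M)
    (hg : ∀ t < n + 1, Admissible Δ m M (g t)) {l : ℝ}
    (hl : deriv (g n) 0 ≤ l) :
    Afun Δ g (n+1) l ≤ Afun Δ g n l := by
  have hg' : ∀ t < n, Admissible Δ m M (g t) := fun t ht => hg t (by omega)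
  have hl0 : 0 ≤ l := le_trans (le_trans hm.le (hg n (by omega)).2.2.2.2.1) hl
  apply csSup_le (Aset_nonempty hΔ)
  rintro y ⟨c, hc, rfl⟩
  simp only []
  apply le_of_forall_pos_le_add
  intro ε hε
  obtain ⟨r, hrS, hrlt⟩ := exists_lt_of_lt_csSup ⟨0, zero_mem hg hc.1⟩
    (show NN g (n+1) c - ε < NN g (n+1) c by linarith)
  obtain ⟨x, hx0, hxc, hrle⟩ := supconv_le hΔ hm hmM hg hc hrS
  have hgx : g n x ≤ deriv (g n) 0 * x := by
    have ha := hg n (by omega)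
    exact g_le_tangent hΔ ha.1 (ha.2.2.1 0 ⟨le_refl _, hΔ.le⟩) ha.2.2.2.1
      ⟨hx0, by linarith [hc.2]⟩
  have hpl : deriv (g n) 0 * x ≤ l * x := mul_le_mul_of_nonneg_right hl hx0
  have helem : NN g n (c - x) - l * (c - x) ≤ Afun Δ g n l :=
    Afun_elem_le hΔ hm hmM hg' hl0 ⟨by linarith, by linarith [hc.2]⟩
  have : NN g (n+1) c < r + ε := by linarith
  nlinarith [hrle]

/-- `B` decreases by at least the increment when `l` is above the base price. -/
lemma Bfun_step (hΔ : 0 < Δ) (hm : 0 < m) (hmM : m ≤ M)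
    (hg : ∀ t < n + 1, Admissible Δ m M (g t)) {l : ℝ}
    (hl : deriv (g n) 0 ≤ l) :
    Bfun Δ g (n+1) l + (NN g (n+1) Δ - NN g n Δ) ≤ Bfun Δ g n l := by
  have := Afun_step hΔ hm hmM hg hl
  unfold Bfun
  linarith

/-- `B` is monotone nonincreasing in `n`. -/
lemma Bfun_mono (hΔ : 0 < Δ) (hm : 0 < m) (hmM : m ≤ M)
    (hg : ∀ t < n + 1, Admissible Δ m M (g t)) {l : ℝ} (hl : 0 ≤ l) :
    Bfun Δ g (n+1) l ≤ Bfun Δ g n l := by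
  have hg' : ∀ t < n, Admissible Δ m M (g t) := fun t ht => hg t (by omega)
  have key : Afun Δ g (n+1) l ≤ Bfun Δ g n l - l * Δ + NN g (n+1) Δ := by
    apply csSup_le (Aset_nonempty hΔ)
    rintro y ⟨c, hc, rfl⟩
    simp only []
    have hsup : NN g n Δ - NN g n c ≤ NN g (n+1) Δ - NN g (n+1) c := by
      have := supermod hΔ hm hmM hg hc.1 hc.2 (le_refl Δ)
      linarith
    have helem : NN g n c - l * c ≤ Afun Δ g n l :=
      Afun_elem_le hΔ hm hmM hg' hl hc
    unfold Bfun
    linarith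
  unfold Bfun at *
  linarith

/-- `Afun` is `Δ`-Lipschitz in `l`. -/
lemma Afun_lip (hΔ : 0 < Δ) (hm : 0 < m) (hmM : m ≤ M)
    (hg : ∀ t < n, Admissible Δ m M (g t)) {l l' : ℝ} (hl : 0 ≤ l) (hl' : 0 ≤ l') :
    Afun Δ g n l' ≤ Afun Δ g n l + Δ * |l' - l| := by
  apply csSup_le (Aset_nonempty hΔ)
  rintro y ⟨c, hc, rfl⟩
  simp only []
  have helem : NN g n c - l * c ≤ Afun Δ g n l := Afun_elem_le hΔ hm hmM hg hl hc
  have habs : (l - l') * c ≤ Δ * |l' - l| := by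
    rcases le_total l l' with h | h
    · have h1 : (l - l') * c ≤ 0 := mul_nonpos_of_nonpos_of_nonneg (by linarith) hc.1
      have h2 : 0 ≤ Δ * |l' - l| := mul_nonneg hΔ.le (abs_nonneg _)
      linarith
    · have h1 : (l - l') * c ≤ (l - l') * Δ :=
        mul_le_mul_of_nonneg_left hc.2 (by linarith)
      have h2 : (l - l') * Δ = Δ * |l' - l| := by
        rw [abs_of_nonpos (by linarith)]; ring
      linarith
  nlinarith [helem]

lemma Bfun_cont (hΔ : 0 < Δ) (hm : 0 < m) (hmM : m ≤ M)
    (hg : ∀ t < n, Admissible Δ m M (g t)) :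
    ContinuousOn (Bfun Δ g n) (Ici (0:ℝ)) := by
  have hA : ContinuousOn (Afun Δ g n) (Ici (0:ℝ)) := by
    intro l hl
    rw [Metric.continuousWithinAt_iff]
    intro ε hε
    refine ⟨ε / (Δ + 1), by positivity, ?_⟩
    intro l' hl' hd
    rw [Real.dist_eq] at hd ⊢
    have h1 := Afun_lip hΔ hm hmM hg (hl : (0:ℝ) ≤ l) (hl' : (0:ℝ) ≤ l')
    have h2 := Afun_lip hΔ hm hmM hg (hl' : (0:ℝ) ≤ l') (hl : (0:ℝ) ≤ l)
    have habs : |l - l'| = |l' - l| := abs_sub_comm _ _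
    have hΔd : Δ * |l' - l| < ε := by
      have : |l' - l| < ε / (Δ + 1) := hd
      calc Δ * |l' - l| ≤ (Δ + 1) * |l' - l| := by nlinarith [abs_nonneg (l' - l)]
        _ < (Δ + 1) * (ε / (Δ + 1)) := by
            apply mul_lt_mul_of_pos_left this (by linarith)
        _ = ε := by field_simp
    rw [abs_lt]
    constructor
    · rw [habs] at h2; linarith
    · linarith
  unfold Bfun
  apply ContinuousOn.sub
  apply ContinuousOn.add hA
  · exact (continuous_mul_right Δ).continuousOn
  · exact continuousOn_const

end BFacts

end CRP

open CRP MeasureTheory intervalIntegral in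
theorem stmt9 (Δ m M : ℝ) (hΔ : 0 < Δ) (hm : 0 < m) (hmM : m ≤ M)
    (T : ℕ) (g : ℕ → ℝ → ℝ) (hg : ∀ t < T, Admissible Δ m M (g t))
    (pi : ℝ) (hpi : 1 ≤ pi)
    (vb : ℕ → ℝ) (htraj : CRTraj Δ g T pi vb) :
    ∑ t ∈ Finset.range T, g t (vb t) / deriv (g t) 0 ≤
      (Δ / pi) * (Real.log (M / m) + 1) := by
  classical
  have hM : 0 < M := lt_of_lt_of_le hm hmM
  set p : ℕ → ℝ := fun t => deriv (g t) 0 with hp_def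
  set inc : ℕ → ℝ := fun t => NN g (t+1) Δ - NN g t Δ with hinc_def
  set E : ℕ → ℝ → ℝ := fun t s => Bfun Δ g t s - Bfun Δ g (t+1) s with hE_def
  have hgn : ∀ n ≤ T, ∀ t < n, Admissible Δ m M (g t) :=
    fun n hn t ht => hg t (lt_of_lt_of_le ht hn)
  -- continuity of E t on [0, ∞)
  have hEcont : ∀ t < T, ContinuousOn (E t) (Ici (0:ℝ)) := by
    intro t ht
    exact (Bfun_cont hΔ hm hmM (hgn t (by omega))).sub
      (Bfun_cont hΔ hm hmM (hgn (t+1) (by omega)))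
  -- integrability of E t s / s^2
  have hIntE : ∀ t < T, ∀ a b : ℝ, m ≤ a → a ≤ b → b ≤ M →
      IntervalIntegrable (fun s => E t s / s^2) volume a b := by
    intro t ht a b ha hab hbM
    apply ContinuousOn.intervalIntegrable
    rw [uIcc_of_le hab]
    apply ContinuousOn.div
    · exact (hEcont t ht).mono
        (fun s hs => mem_Ici.mpr (le_trans hm.le (le_trans ha hs.1)))
    · exact (continuous_pow 2).continuousOn
    · intro s hs
      have : (0:ℝ) < s := lt_of_lt_of_le hm (le_trans ha hs.1)
      positivity
  -- ∫ s in a..b, (s^2)⁻¹ = a⁻¹ - b⁻¹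
  have hinv : ∀ a b : ℝ, 0 < a → a ≤ b → (∫ s in a..b, (s^2)⁻¹) = a⁻¹ - b⁻¹ := by
    intro a b ha hab
    have hder : ∀ s ∈ uIcc a b, HasDerivAt (fun y : ℝ => -y⁻¹) ((s^2)⁻¹) s := by
      intro s hs
      rw [uIcc_of_le hab] at hs
      have hs0 : s ≠ 0 := ne_of_gt (lt_of_lt_of_le ha hs.1)
      exact ((hasDerivAt_inv hs0).neg).congr_deriv (neg_neg _)
    have hint : IntervalIntegrable (fun s : ℝ => (s^2)⁻¹) volume a b := by
      apply ContinuousOn.intervalIntegrable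
      rw [uIcc_of_le hab]
      apply ContinuousOn.inv₀ (continuous_pow 2).continuousOn
      intro s hs
      have : (0:ℝ) < s := lt_of_lt_of_le ha hs.1
      positivity
    rw [integral_eq_sub_of_hasDerivAt hder hint]
    ring
  -- key per-step integral bound
  have keyt : ∀ t < T, inc t * ((p t)⁻¹ - M⁻¹) ≤ ∫ s in m..M, E t s / s^2 := by
    intro t ht
    have hpt : p t ∈ Icc m M := (hg t ht).2.2.2.2
    have hpt0 : 0 < p t := lt_of_lt_of_le hm hpt.1
    have hstep : ∀ s ∈ Icc (p t) M, inc t * (s^2)⁻¹ ≤ E t s / s^2 := by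
      intro s hs
      have hs0 : (0:ℝ) < s := lt_of_lt_of_le hpt0 hs.1
      have h1 := Bfun_step hΔ hm hmM (hgn (t+1) (by omega)) (l := s) hs.1
      have h2 : inc t ≤ E t s := by simp only [hE_def, hinc_def]; linarith
      rw [div_eq_mul_inv]
      apply mul_le_mul_of_nonneg_right h2 (by positivity)
    have hIc : IntervalIntegrable (fun s => inc t * (s^2)⁻¹) volume (p t) M := by
      apply ContinuousOn.intervalIntegrable
      apply ContinuousOn.mul continuousOn_const
      apply ContinuousOn.inv₀ (continuous_pow 2).continuousOn
      intro s hs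
      rw [uIcc_of_le hpt.2] at hs
      have : (0:ℝ) < s := lt_of_lt_of_le hpt0 hs.1
      positivity
    have hmono := integral_mono_on hpt.2 hIc (hIntE t ht (p t) M hpt.1 hpt.2 (le_refl M)) hstep
    have hval : (∫ s in (p t)..M, inc t * (s^2)⁻¹) = inc t * ((p t)⁻¹ - M⁻¹) := by
      rw [intervalIntegral.integral_const_mul, hinv (p t) M hpt0 hpt.2]
    have hsplit := integral_add_adjacent_intervals
      (hIntE t ht m (p t) (le_refl m) hpt.1 hpt.2)
      (hIntE t ht (p t) M hpt.1 hpt.2 (le_refl M))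
    have hnn : 0 ≤ ∫ s in m..(p t), E t s / s^2 := by
      apply integral_nonneg hpt.1
      intro s hs
      have hs0 : (0:ℝ) ≤ s := le_trans hm.le hs.1
      have h1 := Bfun_mono hΔ hm hmM (hgn (t+1) (by omega)) (l := s) hs0
      have h2 : 0 ≤ E t s := by simp only [hE_def]; linarith
      positivity
    linarith
  -- sum bound
  have main : ∑ t ∈ Finset.range T, inc t / p t ≤ Δ * (Real.log (M / m) + 1) := by
    have hsplit : ∀ t ∈ Finset.range T,
        inc t / p t = inc t / M + inc t * ((p t)⁻¹ - M⁻¹) := by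
      intro t ht
      have hpt0 : 0 < p t := lt_of_lt_of_le hm ((hg t (Finset.mem_range.mp ht)).2.2.2.2).1
      field_simp
      ring
    rw [Finset.sum_congr rfl hsplit, Finset.sum_add_distrib]
    have hA : ∑ t ∈ Finset.range T, inc t / M ≤ Δ := by
      rw [← Finset.sum_div]
      have htel : ∑ t ∈ Finset.range T, inc t = NN g T Δ - NN g 0 Δ :=
        Finset.sum_range_sub (fun t => NN g t Δ) T
      rw [htel, NN_zero hΔ.le]
      have hTle : NN g T Δ ≤ M * Δ :=
        NN_le hΔ hm hmM (hgn T (le_refl T)) ⟨hΔ.le, le_refl Δ⟩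
      rw [sub_zero, div_le_iff₀ hM]
      linarith
    have hB : ∑ t ∈ Finset.range T, inc t * ((p t)⁻¹ - M⁻¹) ≤ Δ * Real.log (M / m) := by
      have h1 : ∑ t ∈ Finset.range T, inc t * ((p t)⁻¹ - M⁻¹) ≤
          ∑ t ∈ Finset.range T, ∫ s in m..M, E t s / s^2 := by
        apply Finset.sum_le_sum
        intro t ht
        exact keyt t (Finset.mem_range.mp ht)
      have hIntEach : ∀ t ∈ Finset.range T,
          IntervalIntegrable (fun s => E t s / s^2) volume m M :=
        fun t ht => hIntE t (Finset.mem_range.mp ht) m M (le_refl m) hmM (le_refl M)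
      have h2 : (∑ t ∈ Finset.range T, ∫ s in m..M, E t s / s^2) =
          ∫ s in m..M, ∑ t ∈ Finset.range T, E t s / s^2 :=
        (intervalIntegral.integral_finset_sum hIntEach).symm
      have hint_sum : IntervalIntegrable
          (fun s => ∑ t ∈ Finset.range T, E t s / s^2) volume m M := by
        have h := IntervalIntegrable.sum (Finset.range T) hIntEach
        apply h.congr
        intro s _
        simp [Finset.sum_apply]
      have h3 : (∫ s in m..M, ∑ t ∈ Finset.range T, E t s / s^2) ≤
          ∫ s in m..M, Δ * s⁻¹ := by
        apply integral_mono_on hmM hint_sum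
        · apply ContinuousOn.intervalIntegrable
          rw [uIcc_of_le hmM]
          apply ContinuousOn.mul continuousOn_const
          apply ContinuousOn.inv₀ continuousOn_id
          intro s hs
          exact ne_of_gt (lt_of_lt_of_le hm hs.1)
        · intro s hs
          have hs0 : (0:ℝ) < s := lt_of_lt_of_le hm hs.1
          have htelE : ∑ t ∈ Finset.range T, E t s = Bfun Δ g 0 s - Bfun Δ g T s :=
            Finset.sum_range_sub' (fun t => Bfun Δ g t s) T
          have hB0 : Bfun Δ g 0 s = s * Δ := Bfun_zero hΔ hs0.le
          have hBT : 0 ≤ Bfun Δ g T s :=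
            Bfun_nonneg hΔ hm hmM (hgn T (le_refl T)) hs0.le
          calc ∑ t ∈ Finset.range T, E t s / s^2
              = (∑ t ∈ Finset.range T, E t s) / s^2 := by rw [Finset.sum_div]
            _ = (Bfun Δ g 0 s - Bfun Δ g T s) / s^2 := by rw [htelE]
            _ ≤ (s * Δ) / s^2 := by
                apply div_le_div_of_nonneg_right _ (by positivity)
                · rw [hB0]; linarith
            _ = Δ * s⁻¹ := by field_simp
      have h4 : (∫ s in m..M, Δ * s⁻¹) = Δ * Real.log (M / m) := by
        rw [intervalIntegral.integral_const_mul, integral_inv]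
        rw [uIcc_of_le hmM]
        rintro ⟨h0, _⟩
        linarith
      linarith
    linarith
  -- final assembly
  have hpi0 : 0 < pi := lt_of_lt_of_le one_pos hpi
  have hterm : ∀ t ∈ Finset.range T, g t (vb t) / p t = (inc t / p t) * pi⁻¹ := by
    intro t ht
    have h := (htraj t (Finset.mem_range.mp ht)).2
    rw [eta_eq, eta_eq] at h
    have hgv : g t (vb t) = inc t / pi := by
      rw [eq_div_iff (ne_of_gt hpi0)]
      show g t (vb t) * pi = NN g (t+1) Δ - NN g t Δ
      linarith [h]
    rw [hgv, div_div, mul_comm pi (p t), ← div_div]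
    exact div_eq_mul_inv _ _
  rw [Finset.sum_congr rfl hterm, ← Finset.sum_mul]
  have hlog : 0 ≤ Real.log (M / m) + 1 := by
    have : 0 ≤ Real.log (M / m) :=
      Real.log_nonneg (by rw [le_div_iff₀ hm]; linarith)
    linarith
  calc (∑ t ∈ Finset.range T, inc t / p t) * pi⁻¹
      ≤ (Δ * (Real.log (M / m) + 1)) * pi⁻¹ := by
        apply mul_le_mul_of_nonneg_right main (by positivity)
    _ = (Δ / pi) * (Real.log (M / m) + 1) := by field_simp
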